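/- For all integers n, h, k: F(n+h)·L(n+k) − F(n)·L(n+h+k) = (−1)^n · F(h)·L(k), where (−1)^n denotes the integer power (−1)^n extended to integer exponents (equal to 1 for even n and −1 for odd n). -/

import Mathlib

private lemma fibrec_zero (G : ℤ → ℤ) (hrec : ∀ m : ℤ, G m = G (m - 1) + G (m - 2))
    (h0 : G 0 = 0) (h1 : G 1 = 0) : ∀ m : ℤ, G m = 0 := by
  have key : ∀ m : ℤ, G m = 0 ∧ G (m + 1) = 0 := by
    intro m
    induction m using Int.induction_on with
    | zero => exact ⟨h0, by simpa using h1⟩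
    | succ i ih =>
      refine ⟨ih.2, ?_⟩
      have e := hrec ((i : ℤ) + 2)
      rw [show (i : ℤ) + 2 - 1 = i + 1 by ring, show (i : ℤ) + 2 - 2 = (i : ℤ) by ring] at e
      rw [show (i : ℤ) + 1 + 1 = (i : ℤ) + 2 by ring]
      rw [e, ih.1, ih.2]; ring
    | pred i ih =>
      refine ⟨?_, by simpa using ih.1⟩
      have e := hrec (-(i : ℤ) + 1)
      rw [show -(i : ℤ) + 1 - 1 = -(i : ℤ) by ring,
        show -(i : ℤ) + 1 - 2 = -(i : ℤ) - 1 by ring] at e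
      have h2 : G (-(i : ℤ) + 1) = 0 := ih.2
      have h3 : G (-(i : ℤ)) = 0 := ih.1
      have hgoal : G (-(i : ℤ) - 1) = 0 := by linarith
      first
        | exact hgoal
        | (rw [show -((i : ℤ) + 1) = -(i : ℤ) - 1 by ring]; exact hgoal)
  exact fun m => (key m).1

private lemma alt_lemma (X : ℤ → ℤ) (hrec : ∀ m : ℤ, X (m + 1) = - X m) (c : ℤ)
    (h0 : X 0 = c) : ∀ m : ℤ, X m = c * (m.negOnePow : ℤ) := by
  intro m
  induction m using Int.induction_on with
  | zero => simpa using h0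
  | succ i ih =>
    rw [hrec i, ih, Int.negOnePow_succ]
    push_cast
    ring
  | pred i ih =>
    have e := hrec (-(i : ℤ) - 1)
    rw [show -(i : ℤ) - 1 + 1 = -(i : ℤ) by ring] at e
    have hn2 := Int.negOnePow_succ (-(i : ℤ) - 1)
    rw [show -(i : ℤ) - 1 + 1 = -(i : ℤ) by ring] at hn2
    have hx : X (-(i : ℤ) - 1) = - X (-(i : ℤ)) := by linarith
    have hgoal : X (-(i : ℤ) - 1) = c * ((-(i : ℤ) - 1).negOnePow : ℤ) := by
      rw [hx, ih, hn2]
      push_cast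
      ring
    first
      | exact hgoal
      | (rw [show -((i : ℤ) + 1) = -(i : ℤ) - 1 by ring]; exact hgoal)

/-- `F(n+h)·L(n+k) − F(n)·L(n+h+k) = (−1)^n·F(h)·L(k)` for Fibonacci `F` and
Lucas `L` extended to all integers. -/
theorem stmt_10 (F L : ℤ → ℤ)
    (hF0 : F 0 = 0) (hF1 : F 1 = 1)
    (hF : ∀ n : ℤ, F n = F (n - 1) + F (n - 2))
    (hL0 : L 0 = 2) (hL1 : L 1 = 1)
    (hL : ∀ n : ℤ, L n = L (n - 1) + L (n - 2))
    (n h k : ℤ) :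
    F (n + h) * L (n + k) - F n * L (n + h + k)
      = (n.negOnePow : ℤ) * F h * L k := by
  set c : ℤ := (n.negOnePow : ℤ) with hc
  -- forward recurrences
  have hF2 : ∀ m : ℤ, F (m + 2) = F (m + 1) + F m := by
    intro m
    have e := hF (m + 2)
    rw [show m + 2 - 1 = m + 1 by ring, show m + 2 - 2 = m by ring] at e
    exact e
  have hL2 : ∀ m : ℤ, L (m + 2) = L (m + 1) + L m := by
    intro m
    have e := hL (m + 2)
    rw [show m + 2 - 1 = m + 1 by ring, show m + 2 - 2 = m by ring] at e
    exact e
  -- Lemma A : F(m+1)L m - F m L(m+1) = 2 (-1)^m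
  have A : ∀ m : ℤ, F (m + 1) * L m - F m * L (m + 1) = 2 * (m.negOnePow : ℤ) := by
    have := alt_lemma (fun m => F (m + 1) * L m - F m * L (m + 1))
      (by
        intro m
        have e1 := hF2 m
        have e2 := hL2 m
        rw [show m + 1 + 1 = m + 2 by ring]
        linear_combination L (m + 1) * e1 - F (m + 1) * e2)
      2 (by simp [hF0, hF1, hL0, hL1])
    intro m
    have := this m
    simpa [mul_comm] using this
  -- Lemma B : F(m+1)L(m+1) - F m L(m+2) = (-1)^m
  have B : ∀ m : ℤ, F (m + 1) * L (m + 1) - F m * L (m + 2) = (m.negOnePow : ℤ) := by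
    have := alt_lemma (fun m => F (m + 1) * L (m + 1) - F m * L (m + 2))
      (by
        intro m
        have e1 := hF2 m
        have e2 := hL2 (m + 1)
        rw [show m + 1 + 2 = m + 3 by ring, show m + 1 + 1 = m + 2 by ring] at e2 ⊢
        linear_combination L (m + 2) * e1 - F (m + 1) * e2)
      1 (by simp [hF0, hF1, hL0, hL1])
    intro m
    have := this m
    simpa using this
  -- statement for k = 0, all h
  have Sk0 : ∀ h : ℤ, F (n + h) * L n - F n * L (n + h) - c * F h * 2 = 0 := by
    apply fibrec_zero
    · intro m
      have e1 := hF (n + m)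
      have e2 := hL (n + m)
      have e3 := hF m
      rw [show n + m - 1 = n + (m - 1) by ring, show n + m - 2 = n + (m - 2) by ring] at e1 e2
      linear_combination L n * e1 - F n * e2 - 2 * c * e3
    · simp [hF0]
    · have hA := A n
      rw [hF1, hc]
      linear_combination hA
  -- statement for k = 1, all h
  have Sk1 : ∀ h : ℤ, F (n + h) * L (n + 1) - F n * L (n + h + 1) - c * F h = 0 := by
    apply fibrec_zero
    · intro m
      have e1 := hF (n + m)
      have e2 := hL (n + m + 1)
      have e3 := hF m
      rw [show n + m - 1 = n + (m - 1) by ring, show n + m - 2 = n + (m - 2) by ring] at e1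
      rw [show n + m + 1 - 1 = n + (m - 1) + 1 by ring,
        show n + m + 1 - 2 = n + (m - 2) + 1 by ring] at e2
      linear_combination L (n + 1) * e1 - F n * e2 - c * e3
    · simp [hF0]
    · have hB := B n
      rw [hF1, hc, show n + 1 + 1 = n + 2 by ring]
      linear_combination hB
  -- reduce in k
  have main : ∀ k : ℤ, F (n + h) * L (n + k) - F n * L (n + h + k) - c * F h * L k = 0 := by
    apply fibrec_zero
    · intro m
      have e1 := hL (n + m)
      have e2 := hL (n + h + m)
      have e3 := hL m
      rw [show n + m - 1 = n + (m - 1) by ring, show n + m - 2 = n + (m - 2) by ring] at e1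
      rw [show n + h + m - 1 = n + h + (m - 1) by ring,
        show n + h + m - 2 = n + h + (m - 2) by ring] at e2
      linear_combination F (n + h) * e1 - F n * e2 - c * F h * e3
    · have h0 := Sk0 h
      rw [hL0, show n + 0 = n by ring, show n + h + 0 = n + h by ring]
      linear_combination h0
    · have h1 := Sk1 h
      rw [hL1]
      linear_combination h1
  have hm := main k
  linarith
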